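/- arXiv:2501.03753 — 3 statements merged into one kernel-verified Lean document; each statement's English description precedes it below -/
import Mathlib

section
/- Unbiasedness transfers from Fixed-X to Same-X (Proposition 2(i)). Suppose Assumption 6 holds, and let U(𝕏,𝕐) be an unbiased estimator of OptF under the Fixed-X setting. Then U(𝕏,𝕐) is an unbiased estimator of OptS under the Same-X setting, and consequently the estimator Tr(𝕏,𝕐) + U(𝕏,𝕐) is simultaneously an unbiased estimator of ErrF under the Fixed-X setting and of ErrS under the Same-X setting; that is, the unbiased estimator of the expected test error is the same under the Fixed-X and Same-X settings. -/
/-!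
Proposition 2(i) of "Fixed and Random Covariance Regression Analyses":
an unbiased estimator of the optimism under the Fixed-X setting is also unbiased
under the Same-X setting, and the unbiased estimator `Tr + U` of the expected test
error is the same under the Fixed-X and Same-X settings.
-/

open MeasureTheory Matrix ProbabilityTheory
open scoped BigOperators

noncomputable section

/-- `vec(y yᵀ)`, the vectorized outer product of a vector with itself. -/
def vecOuter {p : ℕ} (y : Fin p → ℝ) : Fin p × Fin p → ℝ := fun ab => y ab.1 * y ab.2

/-- The weighted squared-error loss `L(y, c) = (y - c)ᵀ W (y - c)`. -/
def wLoss {p : ℕ} (Wm : Matrix (Fin p × Fin p) (Fin p × Fin p) ℝ)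
    (y c : Fin p × Fin p → ℝ) : ℝ := (y - c) ⬝ᵥ Wm.mulVec (y - c)

/-- The average loss `(1/n) Σᵢ L(vec(yᵢyᵢᵀ), ĉ(xᵢ))` of a fitted covariance function `ĉ`
over data `(xᵢ, yᵢ), i = 1, …, n`; both the training error and the test error have
this form. -/
def avgLoss {𝒳 : Type*} {p n : ℕ} (W : 𝒳 → Matrix (Fin p × Fin p) (Fin p × Fin p) ℝ)
    (xs : Fin n → 𝒳) (ys : Fin n → Fin p → ℝ) (chat : 𝒳 → Fin p × Fin p → ℝ) : ℝ :=
  (1 / (n:ℝ)) * ∑ i, wLoss (W (xs i)) (vecOuter (ys i)) (chat (xs i))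

/-- Transfer lemma: if `E` and `Xf` are independent, then the expectation of
`g (E ω, Xf ω)` equals the `Xf`-average of the fixed-`b` expectations, and the
latter function of `b` is integrable. -/
lemma indep_transfer {Ω A B : Type*} [MeasurableSpace Ω] [MeasurableSpace A] [MeasurableSpace B]
    (μ : Measure Ω) [IsProbabilityMeasure μ]
    (E : Ω → A) (Xf : Ω → B) (hE : Measurable E) (hX : Measurable Xf)
    (hind : IndepFun E Xf μ)
    (g : A × B → ℝ) (hg : Measurable g)
    (hint : Integrable (fun ω => g (E ω, Xf ω)) μ) :
    (∫ ω, g (E ω, Xf ω) ∂μ = ∫ b, ∫ ω, g (E ω, b) ∂μ ∂(Measure.map Xf μ))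
    ∧ Integrable (fun b => ∫ ω, g (E ω, b) ∂μ) (Measure.map Xf μ) := by
  have hpair : Measurable fun ω => (E ω, Xf ω) := hE.prodMk hX
  have hmap : μ.map (fun ω => (E ω, Xf ω)) = (μ.map E).prod (μ.map Xf) :=
    (indepFun_iff_map_prod_eq_prod_map_map hE.aemeasurable hX.aemeasurable).mp hind
  have hIg : Integrable g ((μ.map E).prod (μ.map Xf)) := by
    rw [← hmap, integrable_map_measure hg.aestronglyMeasurable hpair.aemeasurable]
    exact hint
  haveI : IsProbabilityMeasure (μ.map E) := Measure.isProbabilityMeasure_map hE.aemeasurable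
  haveI : IsProbabilityMeasure (μ.map Xf) := Measure.isProbabilityMeasure_map hX.aemeasurable
  have hinner : ∀ b, ∫ a, g (a, b) ∂(μ.map E) = ∫ ω, g (E ω, b) ∂μ := fun b =>
    integral_map hE.aemeasurable
      ((hg.comp (measurable_id.prodMk measurable_const)).aestronglyMeasurable)
  constructor
  · calc ∫ ω, g (E ω, Xf ω) ∂μ
        = ∫ z, g z ∂(μ.map (fun ω => (E ω, Xf ω))) :=
          (integral_map hpair.aemeasurable hg.aestronglyMeasurable).symm
      _ = ∫ z, g z ∂((μ.map E).prod (μ.map Xf)) := by rw [hmap]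
      _ = ∫ b, ∫ a, g (a, b) ∂(μ.map E) ∂(μ.map Xf) := integral_prod_symm g hIg
      _ = ∫ b, ∫ ω, g (E ω, b) ∂μ ∂(μ.map Xf) :=
          integral_congr_ae (Filter.Eventually.of_forall fun b => hinner b)
  · exact hIg.integral_prod_right.congr (Filter.Eventually.of_forall fun b => hinner b)

theorem unbiasedness_transfers_fixedX_to_sameX
    -- probability space
    {Ω : Type*} [MeasurableSpace Ω] (μ : Measure Ω) [IsProbabilityMeasure μ]
    -- dimensions
    (n p : ℕ) (hn : 0 < n)
    -- space of explanatory variables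
    {𝒳 : Type*} [MeasurableSpace 𝒳]
    -- the true covariance function `C(·)` and its symmetric square root `C^{1/2}(·)`
    (C Csqrt : 𝒳 → Matrix (Fin p) (Fin p) ℝ)
    (hCsqrt : ∀ t, (Csqrt t).IsSymm ∧ Csqrt t * Csqrt t = C t)
    (hCmeas : ∀ a b, Measurable fun t => Csqrt t a b)
    -- the weight matrices `W(·)` (positive semidefinite)
    (W : 𝒳 → Matrix (Fin p × Fin p) (Fin p × Fin p) ℝ)
    (hWpsd : ∀ t, (W t).PosSemidef)
    (hWmeas : ∀ ab cd, Measurable fun t => W t ab cd)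
    -- Assumption 6: the errors for the training (`inl`) and test (`inr`) responses;
    -- entries i.i.d. in both indices, independent of the X's, mean 0, variance 1,
    -- fourth moment μ⁴ and finite (4+η₁)-th absolute moment
    (ε : (Fin n ⊕ Fin n) → Ω → Fin p → ℝ)
    (hεmeas : ∀ α j, Measurable fun ω => ε α ω j)
    (hεindep : iIndepFun (m := fun _ : (Fin n ⊕ Fin n) × Fin p => (inferInstance : MeasurableSpace ℝ))
      (fun q ω => ε q.1 ω q.2) μ)
    (hεident : ∀ q q' : (Fin n ⊕ Fin n) × Fin p,
      IdentDistrib (fun ω => ε q.1 ω q.2) (fun ω => ε q'.1 ω q'.2) μ μ)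
    (hεmean : ∀ α j, ∫ ω, ε α ω j ∂μ = 0)
    (hεvar : ∀ α j, ∫ ω, (ε α ω j) ^ 2 ∂μ = 1)
    (μ4 : ℝ) (hεmom4 : ∀ α j, ∫ ω, (ε α ω j) ^ 4 ∂μ = μ4)
    (hεmom : ∃ η₁ > (0:ℝ), ∀ α j, Integrable (fun ω => |ε α ω j| ^ (4 + η₁)) μ)
    -- Same-X setting: i.i.d. training explanatory variables, independent of the errors;
    -- the test explanatory variables are the same
    (X : Fin n → Ω → 𝒳)
    (hXmeas : ∀ i, Measurable (X i))
    (hXindep : iIndepFun (m := fun _ : Fin n => (inferInstance : MeasurableSpace 𝒳)) X μ)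
    (hXident : ∀ i i', IdentDistrib (X i) (X i') μ μ)
    (hεXindep : IndepFun (fun ω (q : (Fin n ⊕ Fin n) × Fin p) => ε q.1 ω q.2)
      (fun ω (i : Fin n) => X i ω) μ)
    -- the fitted (vectorized) covariance function `Ĉ(·)`, estimated from the training data
    (Chat : (Fin n → 𝒳) → (Fin n → Fin p → ℝ) → 𝒳 → (Fin p × Fin p → ℝ))
    (hChatMeas : ∀ ab, Measurable fun q : (Fin n → 𝒳) × (Fin n → Fin p → ℝ) × 𝒳 =>
      Chat q.1 q.2.1 q.2.2 ab)
    -- the estimator `U(𝕏, 𝕐)` of the optimism, and its measurability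
    (U : (Fin n → 𝒳) → (Fin n → Fin p → ℝ) → ℝ)
    (hUmeas : Measurable fun q : (Fin n → 𝒳) × (Fin n → Fin p → ℝ) => U q.1 q.2)
    -- integrability, under the Fixed-X setting for every design and under the Same-X setting
    (hIntF : ∀ x : Fin n → 𝒳,
      Integrable (fun ω => avgLoss W x (fun i => (Csqrt (x i)).mulVec (ε (Sum.inl i) ω))
          (Chat x (fun j => (Csqrt (x j)).mulVec (ε (Sum.inl j) ω)))) μ ∧
      Integrable (fun ω => avgLoss W x (fun i => (Csqrt (x i)).mulVec (ε (Sum.inr i) ω))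
          (Chat x (fun j => (Csqrt (x j)).mulVec (ε (Sum.inl j) ω)))) μ ∧
      Integrable (fun ω => U x (fun i => (Csqrt (x i)).mulVec (ε (Sum.inl i) ω))) μ)
    (hIntS :
      Integrable (fun ω => avgLoss W (fun i => X i ω)
          (fun i => (Csqrt (X i ω)).mulVec (ε (Sum.inl i) ω))
          (Chat (fun j => X j ω) (fun j => (Csqrt (X j ω)).mulVec (ε (Sum.inl j) ω)))) μ ∧
      Integrable (fun ω => avgLoss W (fun i => X i ω)
          (fun i => (Csqrt (X i ω)).mulVec (ε (Sum.inr i) ω))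
          (Chat (fun j => X j ω) (fun j => (Csqrt (X j ω)).mulVec (ε (Sum.inl j) ω)))) μ ∧
      Integrable (fun ω => U (fun i => X i ω)
          (fun i => (Csqrt (X i ω)).mulVec (ε (Sum.inl i) ω))) μ)
    -- hypothesis: `U` is an unbiased estimator of `OptF = ErrF − E[Tr]` under the Fixed-X
    -- setting, for every fixed design `x = (x₁, …, xₙ)`
    (hU : ∀ x : Fin n → 𝒳,
      (∫ ω, U x (fun i => (Csqrt (x i)).mulVec (ε (Sum.inl i) ω)) ∂μ)
        =
      (∫ ω, avgLoss W x (fun i => (Csqrt (x i)).mulVec (ε (Sum.inr i) ω))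
          (Chat x (fun j => (Csqrt (x j)).mulVec (ε (Sum.inl j) ω))) ∂μ)
      - (∫ ω, avgLoss W x (fun i => (Csqrt (x i)).mulVec (ε (Sum.inl i) ω))
          (Chat x (fun j => (Csqrt (x j)).mulVec (ε (Sum.inl j) ω))) ∂μ)) :
    -- (a)  `U` is an unbiased estimator of `OptS = ErrS − E[Tr]` under the Same-X setting;
    ((∫ ω, U (fun i => X i ω) (fun i => (Csqrt (X i ω)).mulVec (ε (Sum.inl i) ω)) ∂μ)
        =
      (∫ ω, avgLoss W (fun i => X i ω) (fun i => (Csqrt (X i ω)).mulVec (ε (Sum.inr i) ω))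
          (Chat (fun j => X j ω) (fun j => (Csqrt (X j ω)).mulVec (ε (Sum.inl j) ω))) ∂μ)
      - (∫ ω, avgLoss W (fun i => X i ω) (fun i => (Csqrt (X i ω)).mulVec (ε (Sum.inl i) ω))
          (Chat (fun j => X j ω) (fun j => (Csqrt (X j ω)).mulVec (ε (Sum.inl j) ω))) ∂μ))
    ∧
    -- (b)  `Tr + U` is an unbiased estimator of `ErrF` under the Fixed-X setting, for
    -- every fixed design;
    (∀ x : Fin n → 𝒳,
      (∫ ω, (avgLoss W x (fun i => (Csqrt (x i)).mulVec (ε (Sum.inl i) ω))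
            (Chat x (fun j => (Csqrt (x j)).mulVec (ε (Sum.inl j) ω)))
          + U x (fun i => (Csqrt (x i)).mulVec (ε (Sum.inl i) ω))) ∂μ)
        =
      (∫ ω, avgLoss W x (fun i => (Csqrt (x i)).mulVec (ε (Sum.inr i) ω))
          (Chat x (fun j => (Csqrt (x j)).mulVec (ε (Sum.inl j) ω))) ∂μ))
    ∧
    -- (c)  the same estimator `Tr + U` is an unbiased estimator of `ErrS` under the
    -- Same-X setting
    ((∫ ω, (avgLoss W (fun i => X i ω) (fun i => (Csqrt (X i ω)).mulVec (ε (Sum.inl i) ω))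
            (Chat (fun j => X j ω) (fun j => (Csqrt (X j ω)).mulVec (ε (Sum.inl j) ω)))
          + U (fun i => X i ω) (fun i => (Csqrt (X i ω)).mulVec (ε (Sum.inl i) ω))) ∂μ)
        =
      (∫ ω, avgLoss W (fun i => X i ω) (fun i => (Csqrt (X i ω)).mulVec (ε (Sum.inr i) ω))
          (Chat (fun j => X j ω) (fun j => (Csqrt (X j ω)).mulVec (ε (Sum.inl j) ω))) ∂μ)) := by
  classical
  have hE : Measurable (fun ω (q : (Fin n ⊕ Fin n) × Fin p) => ε q.1 ω q.2) :=
    measurable_pi_lambda _ fun q => hεmeas q.1 q.2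
  have hXf : Measurable (fun ω (i : Fin n) => X i ω) :=
    measurable_pi_lambda _ fun i => hXmeas i
  -- measurability of the pieces
  have hYmeas : ∀ (α : Fin n → Fin n ⊕ Fin n) (i : Fin n) (j : Fin p),
      Measurable fun q : (((Fin n ⊕ Fin n) × Fin p → ℝ) × (Fin n → 𝒳)) => (Csqrt (q.2 i)).mulVec (fun k => q.1 (α i, k)) j := by
    intro α i j
    have heq : (fun q : (((Fin n ⊕ Fin n) × Fin p → ℝ) × (Fin n → 𝒳)) => (Csqrt (q.2 i)).mulVec (fun k => q.1 (α i, k)) j)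
        = fun q : (((Fin n ⊕ Fin n) × Fin p → ℝ) × (Fin n → 𝒳)) => ∑ k, Csqrt (q.2 i) j k * q.1 (α i, k) := by
      funext q; simp [Matrix.mulVec, dotProduct]
    rw [heq]
    exact Finset.measurable_sum _ fun k _ =>
      ((hCmeas j k).comp ((measurable_pi_apply i).comp measurable_snd)).mul
        ((measurable_pi_apply (α i, k)).comp measurable_fst)
  have hTrY : Measurable (fun q : (((Fin n ⊕ Fin n) × Fin p → ℝ) × (Fin n → 𝒳)) => fun i => (Csqrt (q.2 i)).mulVec (fun k => q.1 (Sum.inl i, k))) :=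
    measurable_pi_lambda _ fun i => measurable_pi_lambda _ fun j => hYmeas Sum.inl i j
  have hChat' : ∀ (i : Fin n) (ab : Fin p × Fin p),
      Measurable fun q : (((Fin n ⊕ Fin n) × Fin p → ℝ) × (Fin n → 𝒳)) => Chat q.2 ((fun q : (((Fin n ⊕ Fin n) × Fin p → ℝ) × (Fin n → 𝒳)) => fun i => (Csqrt (q.2 i)).mulVec (fun k => q.1 (Sum.inl i, k))) q) (q.2 i) ab := by
    intro i ab
    exact (hChatMeas ab).comp (measurable_snd.prodMk
      (hTrY.prodMk ((measurable_pi_apply i).comp measurable_snd)))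
  have havgMeas : ∀ (sY : (((Fin n ⊕ Fin n) × Fin p → ℝ) × (Fin n → 𝒳)) → Fin n → Fin p → ℝ),
      (∀ i j, Measurable fun q => sY q i j) →
      Measurable fun q : (((Fin n ⊕ Fin n) × Fin p → ℝ) × (Fin n → 𝒳)) => avgLoss W q.2 (sY q) (Chat q.2 ((fun q : (((Fin n ⊕ Fin n) × Fin p → ℝ) × (Fin n → 𝒳)) => fun i => (Csqrt (q.2 i)).mulVec (fun k => q.1 (Sum.inl i, k))) q)) := by
    intro sY hsY
    have hdiff : ∀ (i : Fin n) (ab : Fin p × Fin p),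
        Measurable fun q : (((Fin n ⊕ Fin n) × Fin p → ℝ) × (Fin n → 𝒳)) =>
          vecOuter (sY q i) ab - Chat q.2 ((fun q : (((Fin n ⊕ Fin n) × Fin p → ℝ) × (Fin n → 𝒳)) => fun i => (Csqrt (q.2 i)).mulVec (fun k => q.1 (Sum.inl i, k))) q) (q.2 i) ab := fun i ab =>
      ((hsY i ab.1).mul (hsY i ab.2)).sub (hChat' i ab)
    have heq : (fun q : (((Fin n ⊕ Fin n) × Fin p → ℝ) × (Fin n → 𝒳)) => avgLoss W q.2 (sY q) (Chat q.2 ((fun q : (((Fin n ⊕ Fin n) × Fin p → ℝ) × (Fin n → 𝒳)) => fun i => (Csqrt (q.2 i)).mulVec (fun k => q.1 (Sum.inl i, k))) q)))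
        = fun q : (((Fin n ⊕ Fin n) × Fin p → ℝ) × (Fin n → 𝒳)) => (1 / (n:ℝ)) * ∑ i, ∑ ab,
            (vecOuter (sY q i) ab - Chat q.2 ((fun q : (((Fin n ⊕ Fin n) × Fin p → ℝ) × (Fin n → 𝒳)) => fun i => (Csqrt (q.2 i)).mulVec (fun k => q.1 (Sum.inl i, k))) q) (q.2 i) ab) *
              ∑ cd, W (q.2 i) ab cd *
                (vecOuter (sY q i) cd - Chat q.2 ((fun q : (((Fin n ⊕ Fin n) × Fin p → ℝ) × (Fin n → 𝒳)) => fun i => (Csqrt (q.2 i)).mulVec (fun k => q.1 (Sum.inl i, k))) q) (q.2 i) cd) := by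
      funext q
      simp only [avgLoss, wLoss, dotProduct, Matrix.mulVec, Pi.sub_apply, Function.comp]
    rw [heq]
    exact measurable_const.mul (Finset.measurable_sum _ fun i _ =>
      Finset.measurable_sum _ fun ab _ => (hdiff i ab).mul
        (Finset.measurable_sum _ fun cd _ =>
          (((hWmeas ab cd).comp ((measurable_pi_apply i).comp measurable_snd)).mul
            (hdiff i cd))))
  have hgU : Measurable (fun q : (((Fin n ⊕ Fin n) × Fin p → ℝ) × (Fin n → 𝒳)) => U q.2 ((fun q : (((Fin n ⊕ Fin n) × Fin p → ℝ) × (Fin n → 𝒳)) => fun i => (Csqrt (q.2 i)).mulVec (fun k => q.1 (Sum.inl i, k))) q)) :=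
    hUmeas.comp (measurable_snd.prodMk hTrY)
  have hgTr : Measurable (fun q : (((Fin n ⊕ Fin n) × Fin p → ℝ) × (Fin n → 𝒳)) => avgLoss W q.2 ((fun q : (((Fin n ⊕ Fin n) × Fin p → ℝ) × (Fin n → 𝒳)) => fun i => (Csqrt (q.2 i)).mulVec (fun k => q.1 (Sum.inl i, k))) q) (Chat q.2 ((fun q : (((Fin n ⊕ Fin n) × Fin p → ℝ) × (Fin n → 𝒳)) => fun i => (Csqrt (q.2 i)).mulVec (fun k => q.1 (Sum.inl i, k))) q))) :=
    havgMeas (fun q : (((Fin n ⊕ Fin n) × Fin p → ℝ) × (Fin n → 𝒳)) => fun i => (Csqrt (q.2 i)).mulVec (fun k => q.1 (Sum.inl i, k))) (fun i j => hYmeas Sum.inl i j)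
  have hgTe : Measurable (fun q : (((Fin n ⊕ Fin n) × Fin p → ℝ) × (Fin n → 𝒳)) => avgLoss W q.2 ((fun q : (((Fin n ⊕ Fin n) × Fin p → ℝ) × (Fin n → 𝒳)) => fun i => (Csqrt (q.2 i)).mulVec (fun k => q.1 (Sum.inr i, k))) q) (Chat q.2 ((fun q : (((Fin n ⊕ Fin n) × Fin p → ℝ) × (Fin n → 𝒳)) => fun i => (Csqrt (q.2 i)).mulVec (fun k => q.1 (Sum.inl i, k))) q))) :=
    havgMeas (fun q : (((Fin n ⊕ Fin n) × Fin p → ℝ) × (Fin n → 𝒳)) => fun i => (Csqrt (q.2 i)).mulVec (fun k => q.1 (Sum.inr i, k))) (fun i j => hYmeas Sum.inr i j)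
  -- transfer from Fixed-X to Same-X via independence
  obtain ⟨eU, iU⟩ := indep_transfer μ _ _ hE hXf hεXindep _ hgU hIntS.2.2
  obtain ⟨eTe, iTe⟩ := indep_transfer μ _ _ hE hXf hεXindep _ hgTe hIntS.2.1
  obtain ⟨eTr, iTr⟩ := indep_transfer μ _ _ hE hXf hεXindep _ hgTr hIntS.1
  have ha : ((∫ ω, U (fun i => X i ω) (fun i => (Csqrt (X i ω)).mulVec (ε (Sum.inl i) ω)) ∂μ)
        =
      (∫ ω, avgLoss W (fun i => X i ω) (fun i => (Csqrt (X i ω)).mulVec (ε (Sum.inr i) ω))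
          (Chat (fun j => X j ω) (fun j => (Csqrt (X j ω)).mulVec (ε (Sum.inl j) ω))) ∂μ)
      - (∫ ω, avgLoss W (fun i => X i ω) (fun i => (Csqrt (X i ω)).mulVec (ε (Sum.inl i) ω))
          (Chat (fun j => X j ω) (fun j => (Csqrt (X j ω)).mulVec (ε (Sum.inl j) ω))) ∂μ)) := by
    rw [eU, eTe, eTr, ← integral_sub iTe iTr]
    refine integral_congr_ae (Filter.Eventually.of_forall fun b => ?_)
    exact hU b
  refine ⟨ha, fun x => ?_, ?_⟩
  · rw [integral_add (hIntF x).1 (hIntF x).2.2]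
    linarith [hU x]
  · rw [integral_add hIntS.1 hIntS.2.2]
    linarith [ha]
end
end

section
/- Design-independent Fixed-X optimism equals Same-X optimism (Proposition 2(ii)). Suppose Assumption 6 holds. If, under the Fixed-X setting, the optimism OptF does not depend on the design points x_1,…,x_n, then OptF is equal to the optimism OptS under the Same-X setting. -/
/-!
Proposition 2(ii) of "Fixed and Random Covariance Regression Analyses":
if the Fixed-X optimism does not depend on the design points, then it equals the
Same-X optimism.
-/

open MeasureTheory Matrix ProbabilityTheory
open scoped BigOperators

noncomputable section

/-- The "big G" function: the average loss expressed as a function of the design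
vector and the full error array; `s` selects which errors form the responses. -/
def bigG {𝒳 : Type*} {n p : ℕ} (Csqrt : 𝒳 → Matrix (Fin p) (Fin p) ℝ)
    (W : 𝒳 → Matrix (Fin p × Fin p) (Fin p × Fin p) ℝ)
    (Chat : (Fin n → 𝒳) → (Fin n → Fin p → ℝ) → 𝒳 → (Fin p × Fin p → ℝ))
    (s : Fin n → Fin n ⊕ Fin n)
    (z : (Fin n → 𝒳) × (((Fin n ⊕ Fin n) × Fin p) → ℝ)) : ℝ :=
  avgLoss W z.1 (fun i => (Csqrt (z.1 i)).mulVec (fun j => z.2 (s i, j)))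
    (Chat z.1 (fun i => (Csqrt (z.1 i)).mulVec (fun j => z.2 (Sum.inl i, j))))

lemma bigG_measurable {𝒳 : Type*} [MeasurableSpace 𝒳] {n p : ℕ}
    (Csqrt : 𝒳 → Matrix (Fin p) (Fin p) ℝ)
    (hCmeas : ∀ a b, Measurable fun t => Csqrt t a b)
    (W : 𝒳 → Matrix (Fin p × Fin p) (Fin p × Fin p) ℝ)
    (hWmeas : ∀ ab cd, Measurable fun t => W t ab cd)
    (Chat : (Fin n → 𝒳) → (Fin n → Fin p → ℝ) → 𝒳 → (Fin p × Fin p → ℝ))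
    (hChatMeas : ∀ ab, Measurable fun q : (Fin n → 𝒳) × (Fin n → Fin p → ℝ) × 𝒳 =>
      Chat q.1 q.2.1 q.2.2 ab)
    (s : Fin n → Fin n ⊕ Fin n) :
    Measurable (bigG Csqrt W Chat s) := by
  -- measurability of the response components
  have hy : ∀ (s' : Fin n → Fin n ⊕ Fin n) (i : Fin n) (a : Fin p),
      Measurable fun z : (Fin n → 𝒳) × (((Fin n ⊕ Fin n) × Fin p) → ℝ) =>
        (Csqrt (z.1 i)).mulVec (fun j => z.2 (s' i, j)) a := by
    intro s' i a
    simp only [Matrix.mulVec, dotProduct]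
    refine Finset.measurable_sum _ fun k _ => Measurable.mul ?_ ?_
    · exact (hCmeas a k).comp ((measurable_pi_apply i).comp measurable_fst)
    · exact (measurable_pi_apply (s' i, k)).comp measurable_snd
  -- measurability of the fitted function evaluated at the design points
  have hch : ∀ (i : Fin n) (ab : Fin p × Fin p),
      Measurable fun z : (Fin n → 𝒳) × (((Fin n ⊕ Fin n) × Fin p) → ℝ) =>
        Chat z.1 (fun j => (Csqrt (z.1 j)).mulVec (fun k => z.2 (Sum.inl j, k))) (z.1 i) ab := by
    intro i ab
    have hmap : Measurable fun z : (Fin n → 𝒳) × (((Fin n ⊕ Fin n) × Fin p) → ℝ) =>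
        ((z.1, (fun j => (Csqrt (z.1 j)).mulVec (fun k => z.2 (Sum.inl j, k)), z.1 i)) :
          (Fin n → 𝒳) × (Fin n → Fin p → ℝ) × 𝒳) := by
      refine measurable_fst.prodMk (Measurable.prodMk ?_ ?_)
      · exact measurable_pi_lambda _ fun j => measurable_pi_lambda _ fun a =>
          hy (fun _ => Sum.inl j) j a
      · exact (measurable_pi_apply i).comp measurable_fst
    exact (hChatMeas ab).comp hmap
  have hd : ∀ (i : Fin n) (ab : Fin p × Fin p),
      Measurable fun z : (Fin n → 𝒳) × (((Fin n ⊕ Fin n) × Fin p) → ℝ) =>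
        vecOuter ((Csqrt (z.1 i)).mulVec (fun j => z.2 (s i, j))) ab
          - Chat z.1 (fun j => (Csqrt (z.1 j)).mulVec (fun k => z.2 (Sum.inl j, k))) (z.1 i) ab := by
    intro i ab
    exact ((hy s i ab.1).mul (hy s i ab.2)).sub (hch i ab)
  unfold bigG avgLoss wLoss
  refine Measurable.const_mul (Finset.measurable_sum _ fun i _ => ?_) _
  simp only [Matrix.mulVec, dotProduct, Pi.sub_apply]
  refine Finset.measurable_sum _ fun ab _ => Measurable.mul (hd i ab) ?_
  refine Finset.measurable_sum _ fun cd _ => Measurable.mul ?_ (hd i cd)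
  exact (hWmeas ab cd).comp ((measurable_pi_apply i).comp measurable_fst)

/-- Key lemma: if `U` and `V` are independent, the expectation of `G (U, V)` can be
computed by first integrating out `V` pointwise and then averaging over the law of `U`;
moreover the resulting marginal function is integrable. -/
lemma indep_integral_marginal {Ω A B : Type*} [MeasurableSpace Ω] [MeasurableSpace A]
    [MeasurableSpace B] (μ : Measure Ω) [IsProbabilityMeasure μ] (U : Ω → A) (V : Ω → B)
    (hU : Measurable U) (hV : Measurable V) (h : IndepFun U V μ)
    (G : A × B → ℝ) (hG : Measurable G)
    (hInt : Integrable (fun ω => G (U ω, V ω)) μ) :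
    (∫ ω, G (U ω, V ω) ∂μ = ∫ a, ∫ ω, G (a, V ω) ∂μ ∂(μ.map U)) ∧
    Integrable (fun a => ∫ ω, G (a, V ω) ∂μ) (μ.map U) := by
  have hUV : Measurable fun ω => (U ω, V ω) := hU.prodMk hV
  have hmap : μ.map (fun ω => (U ω, V ω)) = (μ.map U).prod (μ.map V) :=
    (indepFun_iff_map_prod_eq_prod_map_map hU.aemeasurable hV.aemeasurable).mp h
  haveI : IsProbabilityMeasure (μ.map U) := Measure.isProbabilityMeasure_map hU.aemeasurable
  haveI : IsProbabilityMeasure (μ.map V) := Measure.isProbabilityMeasure_map hV.aemeasurable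
  have hIntProd : Integrable G ((μ.map U).prod (μ.map V)) := by
    rw [← hmap]
    exact (integrable_map_measure hG.aestronglyMeasurable hUV.aemeasurable).mpr hInt
  have h3 : ∀ a, ∫ b, G (a, b) ∂(μ.map V) = ∫ ω, G (a, V ω) ∂μ := fun a =>
    integral_map hV.aemeasurable (hG.comp measurable_prodMk_left).aestronglyMeasurable
  constructor
  · calc ∫ ω, G (U ω, V ω) ∂μ = ∫ z, G z ∂(μ.map fun ω => (U ω, V ω)) :=
          (integral_map hUV.aemeasurable hG.aestronglyMeasurable).symm
      _ = ∫ z, G z ∂((μ.map U).prod (μ.map V)) := by rw [hmap]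
      _ = ∫ a, ∫ b, G (a, b) ∂(μ.map V) ∂(μ.map U) := integral_prod G hIntProd
      _ = ∫ a, ∫ ω, G (a, V ω) ∂μ ∂(μ.map U) := by simp only [h3]
  · exact hIntProd.integral_prod_left.congr (Filter.Eventually.of_forall fun a => h3 a)

theorem design_independent_fixedX_optimism_eq_sameX_optimism
    -- probability space
    {Ω : Type*} [MeasurableSpace Ω] (μ : Measure Ω) [IsProbabilityMeasure μ]
    -- dimensions
    (n p : ℕ) (hn : 0 < n)
    -- space of explanatory variables
    {𝒳 : Type*} [MeasurableSpace 𝒳]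
    -- the true covariance function `C(·)` and its symmetric square root `C^{1/2}(·)`
    (C Csqrt : 𝒳 → Matrix (Fin p) (Fin p) ℝ)
    (hCsqrt : ∀ t, (Csqrt t).IsSymm ∧ Csqrt t * Csqrt t = C t)
    (hCmeas : ∀ a b, Measurable fun t => Csqrt t a b)
    -- the weight matrices `W(·)` (positive semidefinite)
    (W : 𝒳 → Matrix (Fin p × Fin p) (Fin p × Fin p) ℝ)
    (hWpsd : ∀ t, (W t).PosSemidef)
    (hWmeas : ∀ ab cd, Measurable fun t => W t ab cd)
    -- Assumption 6: the errors for the training (`inl`) and test (`inr`) responses;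
    -- entries i.i.d. in both indices, independent of the X's, mean 0, variance 1,
    -- fourth moment μ⁴ and finite (4+η₁)-th absolute moment
    (ε : (Fin n ⊕ Fin n) → Ω → Fin p → ℝ)
    (hεmeas : ∀ α j, Measurable fun ω => ε α ω j)
    (hεindep : iIndepFun
      (fun (q : (Fin n ⊕ Fin n) × Fin p) ω => ε q.1 ω q.2) μ)
    (hεident : ∀ q q' : (Fin n ⊕ Fin n) × Fin p,
      IdentDistrib (fun ω => ε q.1 ω q.2) (fun ω => ε q'.1 ω q'.2) μ μ)
    (hεmean : ∀ α j, ∫ ω, ε α ω j ∂μ = 0)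
    (hεvar : ∀ α j, ∫ ω, (ε α ω j) ^ 2 ∂μ = 1)
    (μ4 : ℝ) (hεmom4 : ∀ α j, ∫ ω, (ε α ω j) ^ 4 ∂μ = μ4)
    (hεmom : ∃ η₁ > (0:ℝ), ∀ α j, Integrable (fun ω => |ε α ω j| ^ (4 + η₁)) μ)
    -- Same-X setting: i.i.d. training explanatory variables, independent of the errors;
    -- the test explanatory variables are the same
    (X : Fin n → Ω → 𝒳)
    (hXmeas : ∀ i, Measurable (X i))
    (hXindep : iIndepFun X μ)
    (hXident : ∀ i i', IdentDistrib (X i) (X i') μ μ)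
    (hεXindep : IndepFun (fun ω (q : (Fin n ⊕ Fin n) × Fin p) => ε q.1 ω q.2)
      (fun ω (i : Fin n) => X i ω) μ)
    -- the fitted (vectorized) covariance function `Ĉ(·)`, estimated from the training data
    (Chat : (Fin n → 𝒳) → (Fin n → Fin p → ℝ) → 𝒳 → (Fin p × Fin p → ℝ))
    (hChatMeas : ∀ ab, Measurable fun q : (Fin n → 𝒳) × (Fin n → Fin p → ℝ) × 𝒳 =>
      Chat q.1 q.2.1 q.2.2 ab)
    -- integrability, under the Fixed-X setting for every design and under the Same-X setting
    (hIntF : ∀ x : Fin n → 𝒳,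
      Integrable (fun ω => avgLoss W x (fun i => (Csqrt (x i)).mulVec (ε (Sum.inl i) ω))
          (Chat x (fun j => (Csqrt (x j)).mulVec (ε (Sum.inl j) ω)))) μ ∧
      Integrable (fun ω => avgLoss W x (fun i => (Csqrt (x i)).mulVec (ε (Sum.inr i) ω))
          (Chat x (fun j => (Csqrt (x j)).mulVec (ε (Sum.inl j) ω)))) μ)
    (hIntS :
      Integrable (fun ω => avgLoss W (fun i => X i ω)
          (fun i => (Csqrt (X i ω)).mulVec (ε (Sum.inl i) ω))
          (Chat (fun j => X j ω) (fun j => (Csqrt (X j ω)).mulVec (ε (Sum.inl j) ω)))) μ ∧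
      Integrable (fun ω => avgLoss W (fun i => X i ω)
          (fun i => (Csqrt (X i ω)).mulVec (ε (Sum.inr i) ω))
          (Chat (fun j => X j ω) (fun j => (Csqrt (X j ω)).mulVec (ε (Sum.inl j) ω)))) μ)
    -- hypothesis: the Fixed-X optimism `OptF = ErrF − E[Tr]` does not depend on the
    -- design points `x₁, …, xₙ`
    (hconst : ∀ x x' : Fin n → 𝒳,
      ((∫ ω, avgLoss W x (fun i => (Csqrt (x i)).mulVec (ε (Sum.inr i) ω))
            (Chat x (fun j => (Csqrt (x j)).mulVec (ε (Sum.inl j) ω))) ∂μ)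
        - (∫ ω, avgLoss W x (fun i => (Csqrt (x i)).mulVec (ε (Sum.inl i) ω))
            (Chat x (fun j => (Csqrt (x j)).mulVec (ε (Sum.inl j) ω))) ∂μ))
        =
      ((∫ ω, avgLoss W x' (fun i => (Csqrt (x' i)).mulVec (ε (Sum.inr i) ω))
            (Chat x' (fun j => (Csqrt (x' j)).mulVec (ε (Sum.inl j) ω))) ∂μ)
        - (∫ ω, avgLoss W x' (fun i => (Csqrt (x' i)).mulVec (ε (Sum.inl i) ω))
            (Chat x' (fun j => (Csqrt (x' j)).mulVec (ε (Sum.inl j) ω))) ∂μ))) :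
    -- conclusion: for every design, the Fixed-X optimism equals the Same-X optimism
    -- `OptS = ErrS − E[Tr]`
    ∀ x : Fin n → 𝒳,
      ((∫ ω, avgLoss W x (fun i => (Csqrt (x i)).mulVec (ε (Sum.inr i) ω))
            (Chat x (fun j => (Csqrt (x j)).mulVec (ε (Sum.inl j) ω))) ∂μ)
        - (∫ ω, avgLoss W x (fun i => (Csqrt (x i)).mulVec (ε (Sum.inl i) ω))
            (Chat x (fun j => (Csqrt (x j)).mulVec (ε (Sum.inl j) ω))) ∂μ))
        =
      ((∫ ω, avgLoss W (fun i => X i ω) (fun i => (Csqrt (X i ω)).mulVec (ε (Sum.inr i) ω))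
            (Chat (fun j => X j ω) (fun j => (Csqrt (X j ω)).mulVec (ε (Sum.inl j) ω))) ∂μ)
        - (∫ ω, avgLoss W (fun i => X i ω) (fun i => (Csqrt (X i ω)).mulVec (ε (Sum.inl i) ω))
            (Chat (fun j => X j ω) (fun j => (Csqrt (X j ω)).mulVec (ε (Sum.inl j) ω))) ∂μ)) := by
  intro x
  -- package the X's and the errors into single random elements
  set XX : Ω → (Fin n → 𝒳) := fun ω i => X i ω with hXXdef
  set E : Ω → (((Fin n ⊕ Fin n) × Fin p) → ℝ) := fun ω q => ε q.1 ω q.2 with hEdef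
  have hXXmeas : Measurable XX := measurable_pi_lambda _ hXmeas
  have hEmeas : Measurable E := measurable_pi_lambda _ fun q => hεmeas q.1 q.2
  have hindep : IndepFun XX E μ := hεXindep.symm
  set GTe := bigG Csqrt W Chat (fun i => Sum.inr i) with hGTe
  set GTr := bigG Csqrt W Chat (fun i => Sum.inl i) with hGTr
  have hGTeMeas : Measurable GTe := bigG_measurable Csqrt hCmeas W hWmeas Chat hChatMeas _
  have hGTrMeas : Measurable GTr := bigG_measurable Csqrt hCmeas W hWmeas Chat hChatMeas _
  have hIntTe : Integrable (fun ω => GTe (XX ω, E ω)) μ := (hIntS).2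
  have hIntTr : Integrable (fun ω => GTr (XX ω, E ω)) μ := (hIntS).1
  obtain ⟨hTeEq, hTeInt⟩ := indep_integral_marginal μ XX E hXXmeas hEmeas hindep GTe hGTeMeas hIntTe
  obtain ⟨hTrEq, hTrInt⟩ := indep_integral_marginal μ XX E hXXmeas hEmeas hindep GTr hGTrMeas hIntTr
  haveI : IsProbabilityMeasure (μ.map XX) := Measure.isProbabilityMeasure_map hXXmeas.aemeasurable
  have key : (∫ ω, GTe (XX ω, E ω) ∂μ) - (∫ ω, GTr (XX ω, E ω) ∂μ)
      = (∫ ω, GTe (x, E ω) ∂μ) - (∫ ω, GTr (x, E ω) ∂μ) := by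
    rw [hTeEq, hTrEq, ← integral_sub hTeInt hTrInt]
    have hc : ∀ a : Fin n → 𝒳, (∫ ω, GTe (a, E ω) ∂μ) - (∫ ω, GTr (a, E ω) ∂μ)
        = (∫ ω, GTe (x, E ω) ∂μ) - (∫ ω, GTr (x, E ω) ∂μ) := fun a => hconst a x
    calc ∫ a, ((∫ ω, GTe (a, E ω) ∂μ) - (∫ ω, GTr (a, E ω) ∂μ)) ∂(μ.map XX)
        = ∫ _a, ((∫ ω, GTe (x, E ω) ∂μ) - (∫ ω, GTr (x, E ω) ∂μ)) ∂(μ.map XX) := by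
          exact integral_congr_ae (Filter.Eventually.of_forall hc)
      _ = (∫ ω, GTe (x, E ω) ∂μ) - (∫ ω, GTr (x, E ω) ∂μ) := by
          rw [integral_const]; simp
  exact key.symm
end
end

section
/- Optimism of the WLS fit of a linear covariance regression under the Fixed-X setting (Proposition 3, first part). Suppose Assumption 6 holds, and fit the linear covariance regression model C_β(X) = Σ_{k=1}^K β^{(k)} X^{(k)} by the weighted least squares estimator β̂_WLS = (Σ_{i=1}^n 𝐗_iᵀW(X_i)𝐗_i)^{-1} Σ_{i=1}^n 𝐗_iᵀW(X_i)𝐘_i. Then, under the Fixed-X setting, OptF = (2/n) tr{(x̃ᵀx̃)^{-1} x̃ᵀ Ṽ(x) x̃}. -/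
/-!
Proposition 3 (first part) of "Fixed and Random Covariance Regression Analyses":
the optimism of the WLS fit of a linear covariance regression model under the
Fixed-X setting is `OptF = (2/n) tr{(x̃ᵀx̃)⁻¹ x̃ᵀ Ṽ(x) x̃}`.
-/

open MeasureTheory Matrix ProbabilityTheory
open scoped BigOperators

noncomputable section

/-- Expectation of a real random variable. -/
def expVal {Ω : Type*} [MeasurableSpace Ω] (μ : Measure Ω) (f : Ω → ℝ) : ℝ := ∫ ω, f ω ∂μ

/-- Covariance of two real random variables. -/
def covVal {Ω : Type*} [MeasurableSpace Ω] (μ : Measure Ω) (f g : Ω → ℝ) : ℝ :=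
  ∫ ω, (f ω - expVal μ f) * (g ω - expVal μ g) ∂μ

/-- The `p² × K` design matrix `𝐗 = (vec X⁽¹⁾, …, vec X⁽ᴷ⁾)` built from the explanatory
matrices `X⁽¹⁾, …, X⁽ᴷ⁾`. -/
def designM {p K : ℕ} (t : Fin K → Matrix (Fin p) (Fin p) ℝ) :
    Matrix (Fin p × Fin p) (Fin K) ℝ := Matrix.of fun ab k => t k ab.1 ab.2

/-- The weighted least squares estimator
`β̂_WLS = (Σᵢ 𝐗ᵢᵀ W(Xᵢ) 𝐗ᵢ)⁻¹ Σᵢ 𝐗ᵢᵀ W(Xᵢ) 𝐘ᵢ` for the linear covariance regression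
model `C_β(X) = Σₖ β⁽ᵏ⁾ X⁽ᵏ⁾`. -/
def betaWLS {p K n : ℕ}
    (W : (Fin K → Matrix (Fin p) (Fin p) ℝ) → Matrix (Fin p × Fin p) (Fin p × Fin p) ℝ)
    (tX : Fin n → (Fin K → Matrix (Fin p) (Fin p) ℝ)) (tY : Fin n → Fin p → ℝ) :
    Fin K → ℝ :=
  (∑ i, (designM (tX i))ᵀ * W (tX i) * designM (tX i))⁻¹.mulVec
    (∑ i, ((designM (tX i))ᵀ * W (tX i)).mulVec (vecOuter (tY i)))

-- ### Auxiliary algebra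

section QF

variable {ι : Type*} [Fintype ι]

/-- Bilinear form associated to a matrix. -/
def qForm (Wm : Matrix ι ι ℝ) (u v : ι → ℝ) : ℝ := ∑ a, ∑ b, Wm a b * (u a * v b)

lemma wLoss_eq_qForm {p : ℕ} (Wm : Matrix (Fin p × Fin p) (Fin p × Fin p) ℝ)
    (y c : Fin p × Fin p → ℝ) : wLoss Wm y c = qForm Wm (y - c) (y - c) := by
  simp only [wLoss, qForm, dotProduct, Matrix.mulVec, Finset.mul_sum]
  exact Finset.sum_congr rfl fun a _ => Finset.sum_congr rfl fun b _ => by ring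

lemma qForm_sub_left (Wm : Matrix ι ι ℝ) (u u' v : ι → ℝ) :
    qForm Wm (u - u') v = qForm Wm u v - qForm Wm u' v := by
  simp only [qForm, ← Finset.sum_sub_distrib, Pi.sub_apply]
  exact Finset.sum_congr rfl fun a _ => Finset.sum_congr rfl fun b _ => by ring

lemma qForm_sub_right (Wm : Matrix ι ι ℝ) (u v v' : ι → ℝ) :
    qForm Wm u (v - v') = qForm Wm u v - qForm Wm u v' := by
  simp only [qForm, ← Finset.sum_sub_distrib, Pi.sub_apply]
  exact Finset.sum_congr rfl fun a _ => Finset.sum_congr rfl fun b _ => by ring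

lemma qForm_comm (Wm : Matrix ι ι ℝ) (hsym : ∀ a b, Wm a b = Wm b a) (u v : ι → ℝ) :
    qForm Wm u v = qForm Wm v u := by
  rw [qForm, Finset.sum_comm]
  exact Finset.sum_congr rfl fun b _ => Finset.sum_congr rfl fun a _ => by rw [hsym a b]; ring

lemma wLoss_diff {p : ℕ} (Wm : Matrix (Fin p × Fin p) (Fin p × Fin p) ℝ)
    (hsym : ∀ a b, Wm a b = Wm b a) (y0 y c : Fin p × Fin p → ℝ) :
    wLoss Wm y0 c - wLoss Wm y c
      = qForm Wm y0 y0 - qForm Wm y y - 2 * qForm Wm (y0 - y) c := by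
  rw [wLoss_eq_qForm, wLoss_eq_qForm]
  simp only [qForm_sub_left, qForm_sub_right, qForm_comm Wm hsym c y0, qForm_comm Wm hsym c y]
  ring

lemma trace_eq_double_sum (T V : Matrix ι ι ℝ) :
    Matrix.trace (T * V) = ∑ a, ∑ d, T a d * V d a := by
  simp [Matrix.trace, Matrix.mul_apply, Matrix.diag]

end QF

-- ### Auxiliary probability

section Prob

variable {Ω : Type*} [MeasurableSpace Ω] {μ : Measure Ω} [IsProbabilityMeasure μ]

lemma memL2_mul_integrable {f g : Ω → ℝ} (hf : MemLp f 2 μ) (hg : MemLp g 2 μ) :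
    Integrable (fun ω => f ω * g ω) μ := by
  have h : MemLp (g • f) 1 μ := by
    haveI : ENNReal.HolderTriple 2 2 1 := ⟨by rw [inv_one]; exact ENNReal.inv_two_add_inv_two⟩
    exact MemLp.smul hf hg
  have := memLp_one_iff_integrable.mp h
  exact (by simpa [smul_eq_mul, mul_comm] using this : Integrable (f * g) μ)

lemma covVal_eq_sub {f g : Ω → ℝ} (hf : MemLp f 2 μ) (hg : MemLp g 2 μ) :
    covVal μ f g = (∫ ω, f ω * g ω ∂μ) - (∫ ω, f ω ∂μ) * ∫ ω, g ω ∂μ := by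
  have hfg : Integrable (fun ω => f ω * g ω) μ := memL2_mul_integrable hf hg
  have hf1 : Integrable f μ := hf.integrable one_le_two
  have hg1 : Integrable g μ := hg.integrable one_le_two
  set a := ∫ ω, f ω ∂μ with ha
  set b := ∫ ω, g ω ∂μ with hb
  have hpt : (fun ω => (f ω - expVal μ f) * (g ω - expVal μ g))
      = fun ω => (f ω * g ω - b * f ω) - (a * g ω - a * b) := by
    funext ω; simp only [expVal, ← ha, ← hb]; ring
  have h1 : Integrable (fun ω => f ω * g ω - b * f ω) μ := hfg.sub (hf1.const_mul b)
  have h2 : Integrable (fun ω => a * g ω - a * b) μ :=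
    (hg1.const_mul a).sub (integrable_const (a * b))
  rw [covVal, hpt, integral_sub h1 h2, integral_sub hfg (hf1.const_mul b),
    integral_sub (hg1.const_mul a) (integrable_const (a * b)),
    integral_const_mul, integral_const_mul, integral_const]
  simp [measure_univ, ← ha, ← hb]
  ring

omit [IsProbabilityMeasure μ] in
lemma covVal_comm (f g : Ω → ℝ) : covVal μ f g = covVal μ g f := by
  simp only [covVal]
  exact integral_congr_ae (Filter.Eventually.of_forall fun ω => mul_comm _ _)

omit [IsProbabilityMeasure μ] in
lemma integral_fintype_sum_mul {ι : Type*} [Fintype ι] (k : ι → ℝ) (F : ι → Ω → ℝ)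
    (hF : ∀ a, Integrable (F a) μ) :
    ∫ ω, ∑ a, k a * F a ω ∂μ = ∑ a, k a * ∫ ω, F a ω ∂μ := by
  rw [integral_finset_sum _ fun a _ => (hF a).const_mul (k a)]
  exact Finset.sum_congr rfl fun a _ => integral_const_mul _ _

/-- The joint law of one i.i.d. block is the product of the marginal laws. -/
lemma eps_block_map {n p : ℕ} (ε : (Fin n ⊕ Fin n) → Ω → Fin p → ℝ)
    (hεmeas : ∀ α j, Measurable fun ω => ε α ω j)
    (hεindep : iIndepFun
      (fun (q : (Fin n ⊕ Fin n) × Fin p) ω => ε q.1 ω q.2) μ) (α : Fin n ⊕ Fin n) :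
    Measure.map (fun ω (j : Fin p) => ε α ω j) μ
      = Measure.pi (fun j => Measure.map (fun ω => ε α ω j) μ) := by
  haveI : ∀ j : Fin p, IsProbabilityMeasure (Measure.map (fun ω => ε α ω j) μ) :=
    fun j => Measure.isProbabilityMeasure_map (hεmeas α j).aemeasurable
  refine (Measure.pi_eq fun s hs => ?_).symm
  rw [Measure.map_apply (measurable_pi_lambda _ (hεmeas α)) (MeasurableSet.univ_pi hs)]
  have hpre : (fun ω (j : Fin p) => ε α ω j) ⁻¹' (Set.pi Set.univ s)
      = ⋂ q ∈ (({α} ×ˢ Finset.univ : Finset ((Fin n ⊕ Fin n) × Fin p)) : Finset _),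
          (fun ω => ε q.1 ω q.2) ⁻¹' (s q.2) := by
    ext ω
    simp only [Set.mem_preimage, Set.mem_pi, Set.mem_univ, true_implies, Set.mem_iInter,
      Finset.mem_product, Finset.mem_singleton, Finset.mem_univ, and_true]
    constructor
    · rintro h ⟨a, j⟩ ha
      simp only at ha
      subst ha
      exact h j
    · intro h j
      exact h (α, j) rfl
  rw [hpre, hεindep.measure_inter_preimage_eq_mul _ (fun q _ => hs q.2),
    Finset.prod_product, Finset.prod_singleton]
  exact Finset.prod_congr rfl fun j _ => (Measure.map_apply (hεmeas α j) (hs j)).symm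

end Prob

lemma trace_cycle3 {α β γ : Type*} [Fintype α] [Fintype β] [Fintype γ]
    (P : Matrix α β ℝ) (Q : Matrix β γ ℝ) (R : Matrix γ α ℝ) :
    Matrix.trace (P * (Q * R)) = Matrix.trace (Q * (R * P)) := by
  rw [← Matrix.mul_assoc, Matrix.trace_mul_comm, ← Matrix.mul_assoc, Matrix.trace_mul_comm]

-- ### Matrix abbreviations for the WLS fit

def MsumW {p K n : ℕ}
    (W : (Fin K → Matrix (Fin p) (Fin p) ℝ) → Matrix (Fin p × Fin p) (Fin p × Fin p) ℝ)
    (x : Fin n → (Fin K → Matrix (Fin p) (Fin p) ℝ)) : Matrix (Fin K) (Fin K) ℝ :=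
  ∑ i, (designM (x i))ᵀ * W (x i) * designM (x i)

def BmatW {p K n : ℕ}
    (W : (Fin K → Matrix (Fin p) (Fin p) ℝ) → Matrix (Fin p × Fin p) (Fin p × Fin p) ℝ)
    (x : Fin n → (Fin K → Matrix (Fin p) (Fin p) ℝ)) (i j : Fin n) :
    Matrix (Fin p × Fin p) (Fin p × Fin p) ℝ :=
  designM (x i) * (MsumW W x)⁻¹ * ((designM (x j))ᵀ * W (x j))

section IntSums

variable {Ω : Type*} [MeasurableSpace Ω] {μ : Measure Ω}

lemma integral_double_sum {ι₁ ι₂ : Type*} [Fintype ι₁] [Fintype ι₂]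
    (k : ι₁ → ι₂ → ℝ) (F : ι₁ → ι₂ → Ω → ℝ) (hF : ∀ a b, Integrable (F a b) μ) :
    ∫ ω, ∑ a, ∑ b, k a b * F a b ω ∂μ = ∑ a, ∑ b, k a b * ∫ ω, F a b ω ∂μ := by
  rw [integral_finset_sum _ fun a _ =>
    integrable_finset_sum _ fun b _ => (hF a b).const_mul (k a b)]
  exact Finset.sum_congr rfl fun a _ => integral_fintype_sum_mul (k a) (F a) (hF a)

lemma integral_quad_sum {ι₁ ι₂ ι₃ ι₄ : Type*} [Fintype ι₁] [Fintype ι₂] [Fintype ι₃] [Fintype ι₄]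
    (k : ι₁ → ι₂ → ι₃ → ι₄ → ℝ) (F : ι₁ → ι₂ → ι₃ → ι₄ → Ω → ℝ)
    (hF : ∀ a b j d, Integrable (F a b j d) μ) :
    ∫ ω, ∑ a, ∑ b, ∑ j, ∑ d, k a b j d * F a b j d ω ∂μ
      = ∑ a, ∑ b, ∑ j, ∑ d, k a b j d * ∫ ω, F a b j d ω ∂μ := by
  rw [integral_finset_sum _ fun a _ => integrable_finset_sum _ fun b _ =>
    integrable_finset_sum _ fun j _ => integrable_finset_sum _ fun d _ =>
      (hF a b j d).const_mul (k a b j d)]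
  refine Finset.sum_congr rfl fun a _ => ?_
  rw [integral_finset_sum _ fun b _ => integrable_finset_sum _ fun j _ =>
    integrable_finset_sum _ fun d _ => (hF a b j d).const_mul (k a b j d)]
  exact Finset.sum_congr rfl fun b _ => integral_double_sum (k a b) (F a b) (hF a b)

end IntSums

theorem fixedX_optimism_linear_WLS
    -- probability space
    {Ω : Type*} [MeasurableSpace Ω] (μ : Measure Ω) [IsProbabilityMeasure μ]
    -- dimensions and the fixed design `x₁, …, xₙ`, each `xᵢ` a K-tuple of p×p matrices
    (n p K : ℕ) (hn : 0 < n)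
    (x : Fin n → (Fin K → Matrix (Fin p) (Fin p) ℝ))
    -- the true covariance function `C(·)` (possibly not of the fitted linear form) and
    -- its symmetric square root `C^{1/2}(·)`
    (C Csqrt : (Fin K → Matrix (Fin p) (Fin p) ℝ) → Matrix (Fin p) (Fin p) ℝ)
    (hCsqrt : ∀ t, (Csqrt t).IsSymm ∧ Csqrt t * Csqrt t = C t)
    -- the weight matrices `W(·)` (positive semidefinite) and their symmetric square roots
    (W Wsqrt : (Fin K → Matrix (Fin p) (Fin p) ℝ) → Matrix (Fin p × Fin p) (Fin p × Fin p) ℝ)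
    (hWpsd : ∀ t, (W t).PosSemidef)
    (hWsqrt : ∀ t, (Wsqrt t).IsSymm ∧ Wsqrt t * Wsqrt t = W t)
    -- Assumption 6: the errors for the training (`inl`) and test (`inr`) responses;
    -- entries i.i.d. in both indices, mean 0, variance 1, fourth moment μ⁴ and finite
    -- (4+η₁)-th absolute moment
    (ε : (Fin n ⊕ Fin n) → Ω → Fin p → ℝ)
    (hεmeas : ∀ α j, Measurable fun ω => ε α ω j)
    (hεindep : iIndepFun
      (fun (q : (Fin n ⊕ Fin n) × Fin p) ω => ε q.1 ω q.2) μ)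
    (hεident : ∀ q q' : (Fin n ⊕ Fin n) × Fin p,
      IdentDistrib (fun ω => ε q.1 ω q.2) (fun ω => ε q'.1 ω q'.2) μ μ)
    (hεmean : ∀ α j, ∫ ω, ε α ω j ∂μ = 0)
    (hεvar : ∀ α j, ∫ ω, (ε α ω j) ^ 2 ∂μ = 1)
    (μ4 : ℝ) (hεmom4 : ∀ α j, ∫ ω, (ε α ω j) ^ 4 ∂μ = μ4)
    (hεmom : ∃ η₁ > (0:ℝ), ∀ α j, Integrable (fun ω => |ε α ω j| ^ (4 + η₁)) μ)
    -- Assumption 6: data generating process for training and test responses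
    (Y Y0 : Fin n → Ω → Fin p → ℝ)
    (hY : ∀ i ω, Y i ω = (Csqrt (x i)).mulVec (ε (Sum.inl i) ω))
    (hY0 : ∀ i ω, Y0 i ω = (Csqrt (x i)).mulVec (ε (Sum.inr i) ω))
    -- fourth moments of the responses are finite
    (hYL2 : ∀ i ab, MemLp (fun ω => vecOuter (Y i ω) ab) 2 μ)
    (hY0L2 : ∀ i ab, MemLp (fun ω => vecOuter (Y0 i ω) ab) 2 μ)
    -- `x̃ᵀx̃ = Σᵢ x̃ᵢᵀx̃ᵢ` is invertible, where `x̃ᵢ = W^{1/2}(xᵢ)𝐱ᵢ`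
    (hinv : IsUnit (∑ i, (Wsqrt (x i) * designM (x i))ᵀ * (Wsqrt (x i) * designM (x i))).det) :
    -- OptF = ErrF − E[Tr(𝕏,𝕐)] = (2/n) tr{(x̃ᵀx̃)⁻¹ x̃ᵀ Ṽ(x) x̃},  the fit being
    -- `Ĉ(x) = 𝐱 β̂_WLS` and `Ṽ(x)` the block-diagonal matrix of the
    -- `W^{1/2}(xᵢ) 𝐕(xᵢ) W^{1/2}(xᵢ)` with `𝐕(xᵢ) = Cov(𝐘ᵢ)`
    (∫ ω, (1 / (n:ℝ)) * ∑ i, wLoss (W (x i)) (vecOuter (Y0 i ω))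
        ((designM (x i)).mulVec (betaWLS W x (fun j => Y j ω))) ∂μ)
    - (∫ ω, (1 / (n:ℝ)) * ∑ i, wLoss (W (x i)) (vecOuter (Y i ω))
        ((designM (x i)).mulVec (betaWLS W x (fun j => Y j ω))) ∂μ)
      =
    (2 / (n:ℝ)) * Matrix.trace
      ((∑ i, (Wsqrt (x i) * designM (x i))ᵀ * (Wsqrt (x i) * designM (x i)))⁻¹
        * (∑ i, (Wsqrt (x i) * designM (x i))ᵀ
            * (Wsqrt (x i)
                * Matrix.of (fun ab cd => covVal μ (fun ω => vecOuter (Y i ω) ab)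
                    (fun ω => vecOuter (Y i ω) cd))
                * Wsqrt (x i))
            * (Wsqrt (x i) * designM (x i)))) := by
  classical
  -- symmetry of the weight matrices
  have hsym : ∀ (i : Fin n) (a b : Fin p × Fin p), W (x i) a b = W (x i) b a := by
    intro i a b
    have h := (hWpsd (x i)).1
    conv_lhs => rw [← h]
    simp [Matrix.conjTranspose_apply]
  -- measurability of the error blocks
  have hεvmeas : ∀ α, Measurable (fun ω (j : Fin p) => ε α ω j) :=
    fun α => measurable_pi_lambda _ (hεmeas α)
  -- identical joint distribution of the error blocks
  have hid : ∀ α β, IdentDistrib (fun ω (j : Fin p) => ε α ω j)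
      (fun ω (j : Fin p) => ε β ω j) μ μ := by
    intro α β
    exact ⟨(hεvmeas α).aemeasurable, (hεvmeas β).aemeasurable, by
      rw [eps_block_map ε hεmeas hεindep α, eps_block_map ε hεmeas hεindep β]
      exact congrArg Measure.pi (funext fun j => (hεident (α, j) (β, j)).map_eq)⟩
  -- independence of distinct error blocks
  have hblock : ∀ α β, α ≠ β → IndepFun (fun ω (j : Fin p) => ε α ω j)
      (fun ω (j : Fin p) => ε β ω j) μ := by
    intro α β hab
    have hdisj : Disjoint (({α} ×ˢ Finset.univ : Finset ((Fin n ⊕ Fin n) × Fin p)))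
        ({β} ×ˢ Finset.univ) := by
      simp only [Finset.disjoint_left, Finset.mem_product, Finset.mem_singleton, Finset.mem_univ,
        and_true]
      rintro ⟨a, j⟩ ha hb
      exact hab (ha ▸ hb ▸ rfl)
    have h := hεindep.indepFun_finset _ _ hdisj (fun q => hεmeas q.1 q.2)
    exact h.comp
      (φ := fun v (j : Fin p) => v ⟨(α, j), by simp⟩)
      (ψ := fun v (j : Fin p) => v ⟨(β, j), by simp⟩)
      (measurable_pi_lambda _ fun j => measurable_pi_apply _)
      (measurable_pi_lambda _ fun j => measurable_pi_apply _)
  -- representation of the vectorized outer products through the errors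
  have hmulVecMeas : ∀ (Mx : Matrix (Fin p) (Fin p) ℝ) (r : Fin p),
      Measurable (fun v : Fin p → ℝ => Mx.mulVec v r) := by
    intro Mx r
    simp only [Matrix.mulVec, dotProduct]
    exact Finset.measurable_sum _ fun k _ => (measurable_pi_apply k).const_mul _
  have hgmeas : ∀ (i : Fin n) (a : Fin p × Fin p),
      Measurable (fun v : Fin p → ℝ =>
        (Csqrt (x i)).mulVec v a.1 * (Csqrt (x i)).mulVec v a.2) :=
    fun i a => (hmulVecMeas _ _).mul (hmulVecMeas _ _)
  have hYrep : ∀ (i : Fin n) (a : Fin p × Fin p), (fun ω => vecOuter (Y i ω) a)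
      = (fun v : Fin p → ℝ => (Csqrt (x i)).mulVec v a.1 * (Csqrt (x i)).mulVec v a.2)
        ∘ (fun ω (j : Fin p) => ε (Sum.inl i) ω j) := by
    intro i a; funext ω; simp [vecOuter, hY i ω, Function.comp]
  have hY0rep : ∀ (i : Fin n) (a : Fin p × Fin p), (fun ω => vecOuter (Y0 i ω) a)
      = (fun v : Fin p → ℝ => (Csqrt (x i)).mulVec v a.1 * (Csqrt (x i)).mulVec v a.2)
        ∘ (fun ω (j : Fin p) => ε (Sum.inr i) ω j) := by
    intro i a; funext ω; simp [vecOuter, hY0 i ω, Function.comp]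
  -- E1: test and training responses have the same mean
  have E1 : ∀ (i : Fin n) (a : Fin p × Fin p),
      (∫ ω, vecOuter (Y0 i ω) a ∂μ) = ∫ ω, vecOuter (Y i ω) a ∂μ := by
    intro i a
    rw [hY0rep i a, hYrep i a]
    exact ((hid (Sum.inr i) (Sum.inl i)).comp (hgmeas i a)).integral_eq
  -- E2: test and training responses have the same second moments
  have E2 : ∀ (i : Fin n) (a b : Fin p × Fin p),
      (∫ ω, vecOuter (Y0 i ω) a * vecOuter (Y0 i ω) b ∂μ)
        = ∫ ω, vecOuter (Y i ω) a * vecOuter (Y i ω) b ∂μ := by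
    intro i a b
    have e0 : (fun ω => vecOuter (Y0 i ω) a * vecOuter (Y0 i ω) b)
        = (fun v : Fin p → ℝ =>
            ((Csqrt (x i)).mulVec v a.1 * (Csqrt (x i)).mulVec v a.2)
            * ((Csqrt (x i)).mulVec v b.1 * (Csqrt (x i)).mulVec v b.2))
          ∘ (fun ω (j : Fin p) => ε (Sum.inr i) ω j) := by
      funext ω; simp [vecOuter, hY0 i ω, Function.comp]
    have e1 : (fun ω => vecOuter (Y i ω) a * vecOuter (Y i ω) b)
        = (fun v : Fin p → ℝ =>
            ((Csqrt (x i)).mulVec v a.1 * (Csqrt (x i)).mulVec v a.2)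
            * ((Csqrt (x i)).mulVec v b.1 * (Csqrt (x i)).mulVec v b.2))
          ∘ (fun ω (j : Fin p) => ε (Sum.inl i) ω j) := by
      funext ω; simp [vecOuter, hY i ω, Function.comp]
    rw [e0, e1]
    exact ((hid (Sum.inr i) (Sum.inl i)).comp ((hgmeas i a).mul (hgmeas i b))).integral_eq
  -- E3: a test response is independent of every training response
  have E3 : ∀ (i j : Fin n) (a d : Fin p × Fin p),
      (∫ ω, vecOuter (Y0 i ω) a * vecOuter (Y j ω) d ∂μ)
        = (∫ ω, vecOuter (Y0 i ω) a ∂μ) * ∫ ω, vecOuter (Y j ω) d ∂μ := by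
    intro i j a d
    have hind : IndepFun (fun ω => vecOuter (Y0 i ω) a) (fun ω => vecOuter (Y j ω) d) μ := by
      rw [hY0rep i a, hYrep j d]
      exact (hblock (Sum.inr i) (Sum.inl j) (by simp)).comp (hgmeas i a) (hgmeas j d)
    have := hind.integral_mul_eq_mul_integral ((hY0L2 i a).integrable one_le_two).aestronglyMeasurable
      ((hYL2 j d).integrable one_le_two).aestronglyMeasurable
    simpa [Pi.mul_apply] using this
  -- E4: distinct training responses are independent
  have E4 : ∀ (i j : Fin n), i ≠ j → ∀ (a d : Fin p × Fin p),
      (∫ ω, vecOuter (Y i ω) a * vecOuter (Y j ω) d ∂μ)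
        = (∫ ω, vecOuter (Y i ω) a ∂μ) * ∫ ω, vecOuter (Y j ω) d ∂μ := by
    intro i j hij a d
    have hind : IndepFun (fun ω => vecOuter (Y i ω) a) (fun ω => vecOuter (Y j ω) d) μ := by
      rw [hYrep i a, hYrep j d]
      exact (hblock (Sum.inl i) (Sum.inl j) (by simp [hij])).comp (hgmeas i a) (hgmeas j d)
    have := hind.integral_mul_eq_mul_integral ((hYL2 i a).integrable one_le_two).aestronglyMeasurable
      ((hYL2 j d).integrable one_le_two).aestronglyMeasurable
    simpa [Pi.mul_apply] using this
  -- covariance in terms of moments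
  have hcov : ∀ (i : Fin n) (a d : Fin p × Fin p),
      covVal μ (fun ω => vecOuter (Y i ω) a) (fun ω => vecOuter (Y i ω) d)
        = (∫ ω, vecOuter (Y i ω) a * vecOuter (Y i ω) d ∂μ)
          - (∫ ω, vecOuter (Y i ω) a ∂μ) * ∫ ω, vecOuter (Y i ω) d ∂μ :=
    fun i a d => covVal_eq_sub (hYL2 i a) (hYL2 i d)
  -- the fitted values as linear combinations of the training responses
  have hc : ∀ (i : Fin n) (ω : Ω), (designM (x i)).mulVec (betaWLS W x fun j => Y j ω)
      = fun b => ∑ j, ∑ d, BmatW W x i j b d * vecOuter (Y j ω) d := by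
    intro i ω
    have h0 : betaWLS W x (fun j => Y j ω)
        = (MsumW W x)⁻¹.mulVec
            (∑ j, ((designM (x j))ᵀ * W (x j)).mulVec (vecOuter (Y j ω))) := rfl
    rw [h0, Matrix.mulVec_mulVec]
    have h1 : ∀ (Mx : Matrix (Fin p × Fin p) (Fin K) ℝ) (v : Fin n → Fin K → ℝ),
        Mx.mulVec (∑ j, v j) = ∑ j, Mx.mulVec (v j) := fun Mx v => by
      exact map_sum Mx.mulVecLin v Finset.univ
    rw [h1]
    funext b
    rw [Finset.sum_apply]
    refine Finset.sum_congr rfl fun j _ => ?_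
    rw [Matrix.mulVec_mulVec]
    simp [BmatW, Matrix.mulVec, dotProduct]
  -- square integrability of the fitted values
  have hc2 : ∀ (i : Fin n) (a : Fin p × Fin p),
      MemLp (fun ω => ∑ j, ∑ d, BmatW W x i j a d * vecOuter (Y j ω) d) 2 μ :=
    fun i a => memLp_finset_sum _ fun j _ => memLp_finset_sum _ fun d _ =>
      (hYL2 j d).const_mul _
  -- integrability of the loss functions
  have hlosseq0 : ∀ i : Fin n, (fun ω => wLoss (W (x i)) (vecOuter (Y0 i ω))
        ((designM (x i)).mulVec (betaWLS W x fun j => Y j ω)))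
      = fun ω => ∑ a, ∑ b, W (x i) a b *
          ((vecOuter (Y0 i ω) a - ∑ j, ∑ d, BmatW W x i j a d * vecOuter (Y j ω) d)
           * (vecOuter (Y0 i ω) b - ∑ j, ∑ d, BmatW W x i j b d * vecOuter (Y j ω) d)) := by
    intro i; funext ω
    rw [hc i ω, wLoss_eq_qForm]
    simp [qForm]
  have hlosseq1 : ∀ i : Fin n, (fun ω => wLoss (W (x i)) (vecOuter (Y i ω))
        ((designM (x i)).mulVec (betaWLS W x fun j => Y j ω)))
      = fun ω => ∑ a, ∑ b, W (x i) a b *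
          ((vecOuter (Y i ω) a - ∑ j, ∑ d, BmatW W x i j a d * vecOuter (Y j ω) d)
           * (vecOuter (Y i ω) b - ∑ j, ∑ d, BmatW W x i j b d * vecOuter (Y j ω) d)) := by
    intro i; funext ω
    rw [hc i ω, wLoss_eq_qForm]
    simp [qForm]
  have hint0 : ∀ i : Fin n, Integrable (fun ω => wLoss (W (x i)) (vecOuter (Y0 i ω))
      ((designM (x i)).mulVec (betaWLS W x fun j => Y j ω))) μ := by
    intro i
    rw [hlosseq0 i]
    exact integrable_finset_sum _ fun a _ => integrable_finset_sum _ fun b _ =>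
      (memL2_mul_integrable ((hY0L2 i a).sub (hc2 i a)) ((hY0L2 i b).sub (hc2 i b))).const_mul _
  have hint1 : ∀ i : Fin n, Integrable (fun ω => wLoss (W (x i)) (vecOuter (Y i ω))
      ((designM (x i)).mulVec (betaWLS W x fun j => Y j ω))) μ := by
    intro i
    rw [hlosseq1 i]
    exact integrable_finset_sum _ fun a _ => integrable_finset_sum _ fun b _ =>
      (memL2_mul_integrable ((hYL2 i a).sub (hc2 i a)) ((hYL2 i b).sub (hc2 i b))).const_mul _
  -- the per-observation optimism
  have hΔ : ∀ i : Fin n,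
      (∫ ω, wLoss (W (x i)) (vecOuter (Y0 i ω))
          ((designM (x i)).mulVec (betaWLS W x fun j => Y j ω)) ∂μ)
      - (∫ ω, wLoss (W (x i)) (vecOuter (Y i ω))
          ((designM (x i)).mulVec (betaWLS W x fun j => Y j ω)) ∂μ)
      = 2 * Matrix.trace (W (x i) * BmatW W x i i
          * Matrix.of (fun ab cd => covVal μ (fun ω => vecOuter (Y i ω) ab)
              (fun ω => vecOuter (Y i ω) cd))) := by
    intro i
    rw [← integral_sub (hint0 i) (hint1 i)]
    have hpt : ∀ ω, wLoss (W (x i)) (vecOuter (Y0 i ω))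
          ((designM (x i)).mulVec (betaWLS W x fun j => Y j ω))
        - wLoss (W (x i)) (vecOuter (Y i ω))
          ((designM (x i)).mulVec (betaWLS W x fun j => Y j ω))
        = (∑ a, ∑ b, W (x i) a b * (vecOuter (Y0 i ω) a * vecOuter (Y0 i ω) b))
          - (∑ a, ∑ b, W (x i) a b * (vecOuter (Y i ω) a * vecOuter (Y i ω) b))
          - 2 * ∑ a, ∑ b, ∑ j, ∑ d, (W (x i) a b * BmatW W x i j b d)
              * (vecOuter (Y0 i ω) a * vecOuter (Y j ω) d
                 - vecOuter (Y i ω) a * vecOuter (Y j ω) d) := by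
      intro ω
      rw [hc i ω, wLoss_diff _ (hsym i)]
      have h3 : qForm (W (x i)) (vecOuter (Y0 i ω) - vecOuter (Y i ω))
            (fun b => ∑ j, ∑ d, BmatW W x i j b d * vecOuter (Y j ω) d)
          = ∑ a, ∑ b, ∑ j, ∑ d, (W (x i) a b * BmatW W x i j b d)
              * (vecOuter (Y0 i ω) a * vecOuter (Y j ω) d
                 - vecOuter (Y i ω) a * vecOuter (Y j ω) d) := by
        rw [qForm]
        refine Finset.sum_congr rfl fun a _ => Finset.sum_congr rfl fun b _ => ?_
        simp only [Pi.sub_apply, Finset.mul_sum]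
        refine Finset.sum_congr rfl fun j _ => Finset.sum_congr rfl fun d _ => by ring
      rw [h3]
      rfl
    simp only [hpt]
    have hS1 : Integrable (fun ω => ∑ a, ∑ b, W (x i) a b
        * (vecOuter (Y0 i ω) a * vecOuter (Y0 i ω) b)) μ :=
      integrable_finset_sum _ fun a _ => integrable_finset_sum _ fun b _ =>
        (memL2_mul_integrable (hY0L2 i a) (hY0L2 i b)).const_mul _
    have hS2 : Integrable (fun ω => ∑ a, ∑ b, W (x i) a b
        * (vecOuter (Y i ω) a * vecOuter (Y i ω) b)) μ :=
      integrable_finset_sum _ fun a _ => integrable_finset_sum _ fun b _ =>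
        (memL2_mul_integrable (hYL2 i a) (hYL2 i b)).const_mul _
    have hS3 : Integrable (fun ω => ∑ a, ∑ b, ∑ j, ∑ d, (W (x i) a b * BmatW W x i j b d)
        * (vecOuter (Y0 i ω) a * vecOuter (Y j ω) d
           - vecOuter (Y i ω) a * vecOuter (Y j ω) d)) μ :=
      integrable_finset_sum _ fun a _ => integrable_finset_sum _ fun b _ =>
        integrable_finset_sum _ fun j _ => integrable_finset_sum _ fun d _ =>
          ((memL2_mul_integrable (hY0L2 i a) (hYL2 j d)).sub
            (memL2_mul_integrable (hYL2 i a) (hYL2 j d))).const_mul _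
    have hS12 : Integrable (fun ω =>
        (∑ a, ∑ b, W (x i) a b * (vecOuter (Y0 i ω) a * vecOuter (Y0 i ω) b))
        - ∑ a, ∑ b, W (x i) a b * (vecOuter (Y i ω) a * vecOuter (Y i ω) b)) μ := hS1.sub hS2
    have hS32 : Integrable (fun ω => 2 * ∑ a, ∑ b, ∑ j, ∑ d,
        (W (x i) a b * BmatW W x i j b d)
        * (vecOuter (Y0 i ω) a * vecOuter (Y j ω) d
           - vecOuter (Y i ω) a * vecOuter (Y j ω) d)) μ := hS3.const_mul 2
    rw [integral_sub hS12 hS32, integral_sub hS1 hS2, integral_const_mul,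
      integral_double_sum (fun a b => W (x i) a b)
        (fun a b ω => vecOuter (Y0 i ω) a * vecOuter (Y0 i ω) b)
        (fun a b => memL2_mul_integrable (hY0L2 i a) (hY0L2 i b)),
      integral_double_sum (fun a b => W (x i) a b)
        (fun a b ω => vecOuter (Y i ω) a * vecOuter (Y i ω) b)
        (fun a b => memL2_mul_integrable (hYL2 i a) (hYL2 i b)),
      integral_quad_sum (fun a b j d => W (x i) a b * BmatW W x i j b d)
        (fun a b j d ω => vecOuter (Y0 i ω) a * vecOuter (Y j ω) d
           - vecOuter (Y i ω) a * vecOuter (Y j ω) d)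
        (fun a b j d => (memL2_mul_integrable (hY0L2 i a) (hYL2 j d)).sub
          (memL2_mul_integrable (hYL2 i a) (hYL2 j d)))]
    have hcancel : (∑ a, ∑ b, W (x i) a b * ∫ ω, vecOuter (Y0 i ω) a * vecOuter (Y0 i ω) b ∂μ)
        = ∑ a, ∑ b, W (x i) a b * ∫ ω, vecOuter (Y i ω) a * vecOuter (Y i ω) b ∂μ :=
      Finset.sum_congr rfl fun a _ => Finset.sum_congr rfl fun b _ => by rw [E2 i a b]
    rw [hcancel, sub_self, zero_sub]
    have htr : Matrix.trace (W (x i) * BmatW W x i i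
          * Matrix.of (fun ab cd => covVal μ (fun ω => vecOuter (Y i ω) ab)
              (fun ω => vecOuter (Y i ω) cd)))
        = ∑ a, ∑ b, ∑ d, (W (x i) a b * BmatW W x i i b d)
            * covVal μ (fun ω => vecOuter (Y i ω) a) (fun ω => vecOuter (Y i ω) d) := by
      rw [trace_eq_double_sum]
      refine Finset.sum_congr rfl fun a _ => ?_
      conv_rhs => rw [Finset.sum_comm]
      refine Finset.sum_congr rfl fun d _ => ?_
      rw [Matrix.mul_apply, Finset.sum_mul]
      refine Finset.sum_congr rfl fun b _ => ?_
      simp only [Matrix.of_apply]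
      rw [covVal_comm]
    have hinner : (∑ a, ∑ b, ∑ j, ∑ d, (W (x i) a b * BmatW W x i j b d)
          * ∫ ω, (vecOuter (Y0 i ω) a * vecOuter (Y j ω) d
                  - vecOuter (Y i ω) a * vecOuter (Y j ω) d) ∂μ)
        = - ∑ a, ∑ b, ∑ d, (W (x i) a b * BmatW W x i i b d)
            * covVal μ (fun ω => vecOuter (Y i ω) a) (fun ω => vecOuter (Y i ω) d) := by
      have hj : ∀ a b : Fin p × Fin p, (∑ j, ∑ d, (W (x i) a b * BmatW W x i j b d)
            * ∫ ω, (vecOuter (Y0 i ω) a * vecOuter (Y j ω) d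
                    - vecOuter (Y i ω) a * vecOuter (Y j ω) d) ∂μ)
          = ∑ d, -((W (x i) a b * BmatW W x i i b d)
              * covVal μ (fun ω => vecOuter (Y i ω) a) (fun ω => vecOuter (Y i ω) d)) := by
        intro a b
        have hz : ∀ j ∈ Finset.univ, j ≠ i → (∑ d, (W (x i) a b * BmatW W x i j b d)
              * ∫ ω, (vecOuter (Y0 i ω) a * vecOuter (Y j ω) d
                      - vecOuter (Y i ω) a * vecOuter (Y j ω) d) ∂μ) = 0 := by
          intro j _ hj
          refine Finset.sum_eq_zero fun d _ => ?_
          rw [integral_sub (memL2_mul_integrable (hY0L2 i a) (hYL2 j d))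
              (memL2_mul_integrable (hYL2 i a) (hYL2 j d)),
            E3 i j a d, E1 i a, E4 i j (Ne.symm hj) a d]
          ring
        rw [Finset.sum_eq_single_of_mem i (Finset.mem_univ i) hz]
        refine Finset.sum_congr rfl fun d _ => ?_
        rw [integral_sub (memL2_mul_integrable (hY0L2 i a) (hYL2 i d))
            (memL2_mul_integrable (hYL2 i a) (hYL2 i d)),
          E3 i i a d, E1 i a, hcov i a d]
        ring
      calc (∑ a, ∑ b, ∑ j, ∑ d, (W (x i) a b * BmatW W x i j b d)
            * ∫ ω, (vecOuter (Y0 i ω) a * vecOuter (Y j ω) d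
                    - vecOuter (Y i ω) a * vecOuter (Y j ω) d) ∂μ)
          = ∑ a, ∑ b, ∑ d, -((W (x i) a b * BmatW W x i i b d)
              * covVal μ (fun ω => vecOuter (Y i ω) a) (fun ω => vecOuter (Y i ω) d)) :=
            Finset.sum_congr rfl fun a _ => Finset.sum_congr rfl fun b _ => hj a b
        _ = - ∑ a, ∑ b, ∑ d, (W (x i) a b * BmatW W x i i b d)
              * covVal μ (fun ω => vecOuter (Y i ω) a) (fun ω => vecOuter (Y i ω) d) := by
            simp [Finset.sum_neg_distrib]
    rw [hinner, htr]
    ring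
  -- assembling the left-hand side
  have key1 :
      (∫ ω, (1 / (n:ℝ)) * ∑ i, wLoss (W (x i)) (vecOuter (Y0 i ω))
          ((designM (x i)).mulVec (betaWLS W x (fun j => Y j ω))) ∂μ)
      - (∫ ω, (1 / (n:ℝ)) * ∑ i, wLoss (W (x i)) (vecOuter (Y i ω))
          ((designM (x i)).mulVec (betaWLS W x (fun j => Y j ω))) ∂μ)
      = (1 / (n:ℝ)) * ∑ i, (2 * Matrix.trace (W (x i) * BmatW W x i i
          * Matrix.of (fun ab cd => covVal μ (fun ω => vecOuter (Y i ω) ab)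
              (fun ω => vecOuter (Y i ω) cd)))) := by
    rw [integral_const_mul, integral_const_mul,
      integral_finset_sum _ (fun i _ => hint0 i), integral_finset_sum _ (fun i _ => hint1 i),
      ← mul_sub, ← Finset.sum_sub_distrib]
    exact congrArg _ (Finset.sum_congr rfl fun i _ => hΔ i)
  -- assembling the right-hand side
  have hMeq : (∑ i, (Wsqrt (x i) * designM (x i))ᵀ * (Wsqrt (x i) * designM (x i)))
      = MsumW W x := by
    refine Finset.sum_congr rfl fun i _ => ?_
    rw [Matrix.transpose_mul, (hWsqrt (x i)).1, Matrix.mul_assoc,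
      ← Matrix.mul_assoc (Wsqrt (x i)), (hWsqrt (x i)).2, ← Matrix.mul_assoc]
  have key2 :
      (2 / (n:ℝ)) * Matrix.trace
        ((∑ i, (Wsqrt (x i) * designM (x i))ᵀ * (Wsqrt (x i) * designM (x i)))⁻¹
          * (∑ i, (Wsqrt (x i) * designM (x i))ᵀ
              * (Wsqrt (x i)
                  * Matrix.of (fun ab cd => covVal μ (fun ω => vecOuter (Y i ω) ab)
                      (fun ω => vecOuter (Y i ω) cd))
                  * Wsqrt (x i))
              * (Wsqrt (x i) * designM (x i))))
      = (2 / (n:ℝ)) * ∑ i, Matrix.trace (W (x i) * BmatW W x i i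
          * Matrix.of (fun ab cd => covVal μ (fun ω => vecOuter (Y i ω) ab)
              (fun ω => vecOuter (Y i ω) cd))) := by
    rw [hMeq, Matrix.mul_sum, Matrix.trace_sum]
    congr 1
    refine Finset.sum_congr rfl fun i _ => ?_
    set V : Matrix (Fin p × Fin p) (Fin p × Fin p) ℝ :=
      Matrix.of (fun ab cd => covVal μ (fun ω => vecOuter (Y i ω) ab)
        (fun ω => vecOuter (Y i ω) cd)) with hV
    have hSSA : Wsqrt (x i) * (Wsqrt (x i) * designM (x i)) = W (x i) * designM (x i) := by
      rw [← Matrix.mul_assoc, (hWsqrt (x i)).2]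
    have hSS : ∀ X : Matrix (Fin p × Fin p) (Fin K) ℝ,
        Wsqrt (x i) * (Wsqrt (x i) * X) = W (x i) * X := fun X => by
      rw [← Matrix.mul_assoc, (hWsqrt (x i)).2]
    have h1 : (Wsqrt (x i) * designM (x i))ᵀ * (Wsqrt (x i) * V * Wsqrt (x i))
          * (Wsqrt (x i) * designM (x i))
        = (designM (x i))ᵀ * (W (x i) * (V * (W (x i) * designM (x i)))) := by
      rw [Matrix.transpose_mul, (hWsqrt (x i)).1]
      simp only [Matrix.mul_assoc]
      rw [hSSA, hSS]
    rw [h1]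
    conv_rhs => rw [Matrix.trace_mul_comm]
    conv_lhs => rw [trace_cycle3]
    simp only [Matrix.mul_assoc]
    conv_lhs => rw [trace_cycle3]
    simp only [Matrix.mul_assoc]
    conv_lhs => rw [trace_cycle3]
    simp only [BmatW, Matrix.mul_assoc]
  rw [key2, key1]
  rw [Finset.mul_sum, Finset.mul_sum]
  exact Finset.sum_congr rfl fun i _ => by ring
end
end
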